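/- For all integers 0 ≤ m ≤ n, the de la Vallée Poussin kernel satisfies (1/(m+1)) ∫_{−h_m}^{h_m} |Φ_{n,m}(t)| dt ≤ π·(3 + ln((n+1)/(m+1))), where Φ_{n,m}(t) := sin((m+1)t/2)·sin((2n−m+1)t/2)/(2 sin²(t/2)) and h_m := π/(m+1)^{1/2}. -/

import Mathlib

open Real

/-- The de la Vallée Poussin kernel
`Φ_{n,m}(t) = sin((m+1)t/2)·sin((2n−m+1)t/2)/(2 sin²(t/2))`. -/
noncomputable def Phi (n m : ℕ) (t : ℝ) : ℝ :=
  Real.sin (((m : ℝ) + 1) * t / 2) * Real.sin ((2 * (n : ℝ) - m + 1) * t / 2) /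
    (2 * Real.sin (t / 2) ^ 2)

lemma abs_sin_nat_mul_le (k : ℕ) (x : ℝ) : |Real.sin (k * x)| ≤ k * |Real.sin x| := by
  induction k with
  | zero => simp
  | succ k ih =>
      have h1 : ((k + 1 : ℕ) : ℝ) * x = (k : ℝ) * x + x := by push_cast; ring
      rw [h1, Real.sin_add]
      calc |Real.sin ((k:ℝ)*x) * Real.cos x + Real.cos ((k:ℝ)*x) * Real.sin x|
          ≤ |Real.sin ((k:ℝ)*x) * Real.cos x| + |Real.cos ((k:ℝ)*x) * Real.sin x| :=
            abs_add_le _ _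
        _ ≤ |Real.sin ((k:ℝ)*x)| * 1 + 1 * |Real.sin x| := by
            rw [abs_mul, abs_mul]
            gcongr
            · exact Real.abs_cos_le_one x
            · exact Real.abs_cos_le_one _
        _ ≤ (k:ℝ) * |Real.sin x| + 1 * |Real.sin x| := by
            rw [mul_one]
            gcongr
        _ = ((k + 1 : ℕ) : ℝ) * |Real.sin x| := by push_cast; ring

lemma sin_half_lower {t : ℝ} (h0 : 0 ≤ t) (hπ : t ≤ π) : t / π ≤ Real.sin (t / 2) := by
  have h := Real.mul_le_sin (x := t / 2) (by linarith) (by linarith)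
  have h2 : 2 / π * (t / 2) = t / π := by
    field_simp
  linarith [h2 ▸ h]

lemma Phi_neg (n m : ℕ) (t : ℝ) : Phi n m (-t) = Phi n m t := by
  unfold Phi
  rw [show ((m:ℝ)+1) * -t / 2 = -(((m:ℝ)+1) * t / 2) by ring,
      show (2*(n:ℝ)-(m:ℝ)+1) * -t / 2 = -((2*(n:ℝ)-(m:ℝ)+1) * t / 2) by ring,
      show -t/2 = -(t/2) by ring]
  simp [Real.sin_neg]

lemma abs_Phi_le_const (n m : ℕ) (hmn : m ≤ n) {t : ℝ} (ht : |t| ≤ π) :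
    |Phi n m t| ≤ ((m:ℝ)+1) * ((n:ℝ)+1) * π^2 / 4 := by
  have hπ := Real.pi_pos
  wlog h0 : 0 ≤ t generalizing t
  · have := this (t := -t) (by rwa [abs_neg]) (by linarith [not_le.1 h0])
    rwa [Phi_neg] at this
  rw [abs_of_nonneg h0] at ht
  rcases h0.eq_or_lt with heq | hpos
  · rw [← heq]
    simp only [Phi, mul_zero, zero_div, Real.sin_zero, zero_mul, mul_zero, abs_zero]
    positivity
  have hs : t / π ≤ Real.sin (t / 2) := sin_half_lower h0 ht
  have hs0 : 0 < Real.sin (t / 2) := lt_of_lt_of_le (div_pos hpos hπ) hs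
  have hden : (0:ℝ) < 2 * Real.sin (t / 2) ^ 2 := by positivity
  rw [Phi, abs_div, abs_of_pos hden, abs_mul]
  have hA : |Real.sin (((m:ℝ)+1) * t / 2)| ≤ ((m:ℝ)+1) * t / 2 := by
    refine (Real.abs_sin_le_abs).trans ?_
    rw [abs_of_nonneg (by positivity)]
  have hB : |Real.sin ((2*(n:ℝ)-(m:ℝ)+1) * t / 2)| ≤ ((n:ℝ)+1) * t := by
    have hmn' : (m:ℝ) ≤ (n:ℝ) := by exact_mod_cast hmn
    refine (Real.abs_sin_le_abs).trans ?_
    rw [abs_of_nonneg (by nlinarith : (0:ℝ) ≤ (2*(n:ℝ)-(m:ℝ)+1) * t / 2)]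
    nlinarith
  calc |Real.sin (((m:ℝ)+1) * t / 2)| * |Real.sin ((2*(n:ℝ)-(m:ℝ)+1) * t / 2)| /
        (2 * Real.sin (t / 2) ^ 2)
      ≤ (((m:ℝ)+1) * t / 2 * (((n:ℝ)+1) * t)) / (2 * (t/π)^2) := by
        apply div_le_div₀ (by positivity)
        · exact mul_le_mul hA hB (abs_nonneg _) (by positivity)
        · positivity
        · have := pow_le_pow_left₀ (div_nonneg hpos.le hπ.le) hs 2
          nlinarith
    _ = ((m:ℝ)+1) * ((n:ℝ)+1) * π^2 / 4 := by
        field_simp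
        ring

lemma abs_Phi_le_inv (n m : ℕ) {t : ℝ} (hpos : 0 < t) (ht : t ≤ π) :
    |Phi n m t| ≤ ((m:ℝ)+1) * π / 2 * (1/t) := by
  have hπ := Real.pi_pos
  have hs : t / π ≤ Real.sin (t / 2) := sin_half_lower hpos.le ht
  have hs0 : 0 < Real.sin (t / 2) := lt_of_lt_of_le (div_pos hpos hπ) hs
  have hden : (0:ℝ) < 2 * Real.sin (t / 2) ^ 2 := by positivity
  rw [Phi, abs_div, abs_of_pos hden, abs_mul]
  have hA : |Real.sin (((m:ℝ)+1) * t / 2)| ≤ ((m:ℝ)+1) * Real.sin (t / 2) := by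
    have h := abs_sin_nat_mul_le (m+1) (t/2)
    have harg : ((m+1 : ℕ) : ℝ) * (t/2) = ((m:ℝ)+1) * t / 2 := by push_cast; ring
    rw [harg] at h
    refine h.trans ?_
    rw [abs_of_pos hs0]
    push_cast
    exact le_refl _
  have hB : |Real.sin ((2*(n:ℝ)-(m:ℝ)+1) * t / 2)| ≤ 1 := Real.abs_sin_le_one _
  calc |Real.sin (((m:ℝ)+1) * t / 2)| * |Real.sin ((2*(n:ℝ)-(m:ℝ)+1) * t / 2)| /
        (2 * Real.sin (t / 2) ^ 2)
      ≤ (((m:ℝ)+1) * Real.sin (t / 2) * 1) / (2 * Real.sin (t / 2) ^ 2) :=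
        div_le_div₀ (by positivity)
          (mul_le_mul hA hB (abs_nonneg _) (by positivity)) hden le_rfl
    _ = ((m:ℝ)+1) / (2 * Real.sin (t / 2)) := by
        field_simp
    _ ≤ ((m:ℝ)+1) / (2 * (t/π)) := by
        gcongr
    _ = ((m:ℝ)+1) * π / 2 * (1/t) := by
        field_simp

lemma abs_Phi_le_csc (n m : ℕ) (t : ℝ) :
    |Phi n m t| ≤ 1 / (2 * Real.sin (t/2)^2) := by
  rcases eq_or_ne (Real.sin (t/2)) 0 with h | h
  · simp [Phi, h]
  · have hden : (0:ℝ) < 2 * Real.sin (t/2)^2 := by positivity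
    rw [Phi, abs_div, abs_of_pos hden, abs_mul]
    apply div_le_div₀ (by norm_num) ?_ hden le_rfl
    calc |Real.sin (((m:ℝ)+1) * t / 2)| * |Real.sin ((2*(n:ℝ)-(m:ℝ)+1) * t / 2)|
        ≤ 1 * 1 := mul_le_mul (Real.abs_sin_le_one _) (Real.abs_sin_le_one _)
            (abs_nonneg _) zero_le_one
      _ = 1 := one_mul 1

lemma integral_csc_sq {a b : ℝ} (ha : 0 < a) (hb : b ≤ π) (hab : a ≤ b) :
    ∫ t in a..b, 1 / (2 * Real.sin (t/2)^2) =
      Real.cos (a/2)/Real.sin (a/2) - Real.cos (b/2)/Real.sin (b/2) := by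
  have hπ := Real.pi_pos
  have hspos : ∀ x ∈ Set.uIcc a b, 0 < Real.sin (x/2) := by
    intro x hx
    rw [Set.uIcc_of_le hab] at hx
    exact Real.sin_pos_of_pos_of_lt_pi (by linarith [hx.1]) (by linarith [hx.2])
  have key : ∀ x ∈ Set.uIcc a b, HasDerivAt (fun t => -(Real.cos (t/2)/Real.sin (t/2)))
      (1 / (2*Real.sin (x/2)^2)) x := by
    intro x hx
    have hs := hspos x hx
    have hc : HasDerivAt (fun t:ℝ => Real.cos (t/2)) (-Real.sin (x/2) * (1/2)) x := by
      have := (Real.hasDerivAt_cos (x/2)).comp x ((hasDerivAt_id x).div_const 2)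
      simpa [Function.comp_def] using this
    have hsn : HasDerivAt (fun t:ℝ => Real.sin (t/2)) (Real.cos (x/2) * (1/2)) x := by
      have := (Real.hasDerivAt_sin (x/2)).comp x ((hasDerivAt_id x).div_const 2)
      simpa [Function.comp_def] using this
    have hdiv := (hc.div hsn hs.ne').neg
    refine hdiv.congr_deriv ?_
    have hpyth := Real.sin_sq_add_cos_sq (x/2)
    field_simp [hs.ne']
    nlinarith
  have hcont : ContinuousOn (fun t => 1/(2*Real.sin (t/2)^2)) (Set.uIcc a b) := by
    apply ContinuousOn.div continuousOn_const
    · fun_prop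
    · intro x hx
      have := hspos x hx
      positivity
  rw [intervalIntegral.integral_eq_sub_of_hasDerivAt key hcont.intervalIntegrable]
  ring



set_option maxHeartbeats 1600000 in
theorem vdlP_kernel_integral_bound (m n : ℕ) (hmn : m ≤ n) :
    (1 / ((m : ℝ) + 1)) *
        ∫ t in (-(π / ((m : ℝ) + 1) ^ ((1 : ℝ) / 2)))..(π / ((m : ℝ) + 1) ^ ((1 : ℝ) / 2)),
          |Phi n m t| ≤
      π * (3 + Real.log (((n : ℝ) + 1) / ((m : ℝ) + 1))) := by
  have hπ := Real.pi_pos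
  have hπ1 := Real.one_le_pi_div_two
  have hm1 : (0:ℝ) < (m:ℝ)+1 := by positivity
  have hn1 : (0:ℝ) < (n:ℝ)+1 := by positivity
  have hmn' : (m:ℝ)+1 ≤ (n:ℝ)+1 := by
    have : (m:ℝ) ≤ (n:ℝ) := by exact_mod_cast hmn
    linarith
  rw [show ((m:ℝ)+1) ^ ((1:ℝ)/2) = Real.sqrt ((m:ℝ)+1) from (Real.sqrt_eq_rpow _).symm]
  set L : ℝ := Real.log (((n:ℝ)+1)/((m:ℝ)+1)) with hL
  have hLpos : 0 ≤ L := Real.log_nonneg (by rw [le_div_iff₀ hm1]; linarith)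
  set h : ℝ := π / Real.sqrt ((m:ℝ)+1) with hh
  set δ₁ : ℝ := 1/((n:ℝ)+1) with hδ₁
  set δ₂ : ℝ := 1/((m:ℝ)+1) with hδ₂
  have hsq0 : 0 < Real.sqrt ((m:ℝ)+1) := Real.sqrt_pos.2 hm1
  have hsq1 : 1 ≤ Real.sqrt ((m:ℝ)+1) := by
    exact Real.one_le_sqrt.2 (by linarith)
  have hsqle : Real.sqrt ((m:ℝ)+1) ≤ (m:ℝ)+1 := by
    nlinarith [Real.sq_sqrt hm1.le, Real.sqrt_nonneg ((m:ℝ)+1)]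
  have hhpos : 0 < h := div_pos hπ hsq0
  have hhπ : h ≤ π := div_le_self hπ.le hsq1
  have hδ₁pos : 0 < δ₁ := by positivity
  have hδ₂pos : 0 < δ₂ := by positivity
  have hδ₁₂ : δ₁ ≤ δ₂ := by
    rw [hδ₁, hδ₂]
    exact one_div_le_one_div_of_le hm1 hmn'
  have hδ₂h : δ₂ ≤ h := by
    rw [hδ₂, hh]
    exact div_le_div₀ hπ.le (by linarith) hsq0 hsqle
  have hδ₂π : δ₂ ≤ π := le_trans hδ₂h hhπ
  have hδ₁π : δ₁ ≤ π := le_trans hδ₁₂ hδ₂π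
  clear_value L h δ₁ δ₂
  -- integrability
  have hmeas : Measurable (Phi n m) := by unfold Phi; fun_prop
  have hIntAll : ∀ a b : ℝ, -π ≤ a → a ≤ b → b ≤ π →
      IntervalIntegrable (fun t => |Phi n m t|) MeasureTheory.volume a b := by
    intro a b hha hab hbh
    rw [intervalIntegrable_iff]
    apply MeasureTheory.Integrable.mono'
      (g := fun _ => ((m:ℝ)+1)*((n:ℝ)+1)*π^2/4)
    · exact MeasureTheory.integrableOn_const
        (by rw [Set.uIoc_of_le hab]; exact measure_Ioc_lt_top.ne)
    · exact (hmeas.abs).aestronglyMeasurable.restrict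
    · rw [MeasureTheory.ae_restrict_iff' measurableSet_uIoc]
      refine MeasureTheory.ae_of_all _ (fun x hx => ?_)
      rw [Set.uIoc_of_le hab] at hx
      rw [Real.norm_eq_abs, abs_abs]
      exact abs_Phi_le_const n m hmn (abs_le.2 ⟨by linarith [hx.1], by linarith [hx.2]⟩)
  -- evenness
  have heven : ∫ t in (-h)..(0:ℝ), |Phi n m t| = ∫ t in (0:ℝ)..h, |Phi n m t| := by
    have hcn := intervalIntegral.integral_comp_neg (a := (0:ℝ)) (b := h)
      (fun t => |Phi n m t|)
    simp only [Phi_neg, neg_zero] at hcn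
    exact hcn.symm
  have hsplit0 : ∫ t in (-h)..h, |Phi n m t| =
      (∫ t in (-h)..(0:ℝ), |Phi n m t|) + ∫ t in (0:ℝ)..h, |Phi n m t| :=
    (intervalIntegral.integral_add_adjacent_intervals
      (hIntAll _ _ (by linarith) (by linarith) (by linarith))
      (hIntAll _ _ (by linarith) (by linarith) (by linarith))).symm
  have hsplit1 : ∫ t in (0:ℝ)..h, |Phi n m t| =
      (∫ t in (0:ℝ)..δ₁, |Phi n m t|) + (∫ t in δ₁..δ₂, |Phi n m t|) +
        ∫ t in δ₂..h, |Phi n m t| := by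
    rw [intervalIntegral.integral_add_adjacent_intervals
      (hIntAll _ _ (by linarith) (by linarith) (by linarith))
      (hIntAll _ _ (by linarith) (by linarith) (by linarith)),
      intervalIntegral.integral_add_adjacent_intervals
      (hIntAll _ _ (by linarith) (by linarith) (by linarith))
      (hIntAll _ _ (by linarith) (by linarith) (by linarith))]
  -- bound I1
  have hI1 : ∫ t in (0:ℝ)..δ₁, |Phi n m t| ≤ ((m:ℝ)+1)*π^2/4 := by
    have hmono := intervalIntegral.integral_mono_on hδ₁pos.le
      (hIntAll _ _ (by linarith) (by linarith) (by linarith))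
      (intervalIntegrable_const (c := ((m:ℝ)+1)*((n:ℝ)+1)*π^2/4))
      (fun x hx => abs_Phi_le_const n m hmn
        (by rw [abs_of_nonneg hx.1]; linarith [hx.2]))
    rw [intervalIntegral.integral_const, smul_eq_mul, sub_zero] at hmono
    calc ∫ t in (0:ℝ)..δ₁, |Phi n m t| ≤ δ₁ * (((m:ℝ)+1)*((n:ℝ)+1)*π^2/4) := hmono
      _ = ((m:ℝ)+1)*π^2/4 := by rw [hδ₁]; field_simp
  -- bound I2
  have hI2 : ∫ t in δ₁..δ₂, |Phi n m t| ≤ ((m:ℝ)+1) * π / 2 * L := by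
    have hcont : IntervalIntegrable (fun t => ((m:ℝ)+1) * π / 2 * (1/t))
        MeasureTheory.volume δ₁ δ₂ := by
      apply ContinuousOn.intervalIntegrable
      apply ContinuousOn.mul continuousOn_const
      apply ContinuousOn.div continuousOn_const continuousOn_id
      intro x hx
      rw [Set.uIcc_of_le hδ₁₂] at hx
      exact ne_of_gt (lt_of_lt_of_le hδ₁pos hx.1)
    have hmono := intervalIntegral.integral_mono_on hδ₁₂
      (hIntAll _ _ (by linarith) (by linarith) (by linarith)) hcont
      (fun x hx => abs_Phi_le_inv n m (lt_of_lt_of_le hδ₁pos hx.1)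
        (le_trans hx.2 hδ₂π))
    rw [intervalIntegral.integral_const_mul, integral_one_div
      (by rw [Set.uIcc_of_le hδ₁₂]; rintro ⟨h1, h2⟩; linarith)] at hmono
    have hq : δ₂/δ₁ = ((n:ℝ)+1)/((m:ℝ)+1) := by
      rw [hδ₁, hδ₂]; field_simp
    rwa [hq, ← hL] at hmono
  -- bound I3
  have hI3 : ∫ t in δ₂..h, |Phi n m t| ≤ 2*((m:ℝ)+1) := by
    have hcont : IntervalIntegrable (fun t => 1/(2*Real.sin (t/2)^2))
        MeasureTheory.volume δ₂ h := by
      apply ContinuousOn.intervalIntegrable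
      apply ContinuousOn.div continuousOn_const
      · fun_prop
      · intro x hx
        rw [Set.uIcc_of_le hδ₂h] at hx
        have hs : 0 < Real.sin (x/2) := Real.sin_pos_of_pos_of_lt_pi
          (by linarith [hx.1]) (by linarith [hx.2])
        positivity
    have hmono := intervalIntegral.integral_mono_on hδ₂h
      (hIntAll _ _ (by linarith) (by linarith) (by linarith)) hcont
      (fun x _ => abs_Phi_le_csc n m x)
    rw [integral_csc_sq hδ₂pos hhπ hδ₂h] at hmono
    -- cot bounds
    have hδ₂1 : δ₂ ≤ 1 := by rw [hδ₂, div_le_one hm1]; linarith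
    have hx2 : δ₂/2 < π/2 := by linarith
    have hδ2pos2 : 0 < δ₂/2 := by linarith
    have hcos : 0 < Real.cos (δ₂/2) := Real.cos_pos_of_mem_Ioo ⟨by linarith, hx2⟩
    have hsin : 0 < Real.sin (δ₂/2) := Real.sin_pos_of_pos_of_lt_pi hδ2pos2 (by linarith)
    have htan := Real.lt_tan hδ2pos2 hx2
    rw [Real.tan_eq_sin_div_cos] at htan
    have h1 : δ₂/2 * Real.cos (δ₂/2) < Real.sin (δ₂/2) := by
      rw [lt_div_iff₀ hcos] at htan; linarith
    have heq : δ₂ * ((m:ℝ)+1) = 1 := by rw [hδ₂]; field_simp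
    have hcot : Real.cos (δ₂/2)/Real.sin (δ₂/2) ≤ 2*((m:ℝ)+1) := by
      rw [div_le_iff₀ hsin]
      have h2 := mul_lt_mul_of_pos_left h1
        (show (0:ℝ) < 2*((m:ℝ)+1) by positivity)
      have h3 : 2*((m:ℝ)+1) * (δ₂/2 * Real.cos (δ₂/2)) =
          δ₂ * ((m:ℝ)+1) * Real.cos (δ₂/2) := by ring
      rw [h3, heq, one_mul] at h2
      linarith
    have hcot2 : 0 ≤ Real.cos (h/2)/Real.sin (h/2) :=
      div_nonneg (Real.cos_nonneg_of_mem_Icc ⟨by linarith, by linarith⟩)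
        (Real.sin_nonneg_of_nonneg_of_le_pi (by linarith) (by linarith))
    linarith
  -- assembly
  have htotal : ∫ t in (-h)..h, |Phi n m t| ≤ ((m:ℝ)+1) * (π^2/2 + π*L + 4) := by
    rw [hsplit0, heven, hsplit1]
    have hexp : ((m:ℝ)+1) * (π^2/2 + π*L + 4) =
        2*(((m:ℝ)+1)*π^2/4) + 2*(((m:ℝ)+1)*π/2*L) + 2*(2*((m:ℝ)+1)) := by ring
    rw [hexp]
    linarith
  have hfin := mul_le_mul_of_nonneg_left htotal
    (le_of_lt (by positivity : (0:ℝ) < 1/((m:ℝ)+1)))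
  have hsimp : (1/((m:ℝ)+1)) * (((m:ℝ)+1) * (π^2/2 + π*L + 4)) = π^2/2 + π*L + 4 := by
    field_simp
  rw [hsimp] at hfin
  rw [hδ₂]
  refine hfin.trans ?_
  have hπgt : π > 3.141592 := Real.pi_gt_d6
  have hπlt : π < 3.15 := by
    have := Real.pi_lt_d2
    linarith
  have hrw : π * (3 + L) = 3*π + π*L := by ring
  rw [hrw]
  have hkey : π^2/2 + 4 ≤ 3*π := by nlinarith [hπgt, hπlt]
  linarith
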